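/- For 0 ≤ ε < λ ≤ 1 with ε > 0 and λ < 1, Σ_{i=⌈λn⌉}^{n} binom(n,i) ε^i (1-ε)^{n-i} ≤ 2^{-n·D(λ‖ε)}, where D(λ‖ε) = λ log₂(λ/ε) + (1-λ) log₂((1-λ)/(1-ε)). -/
import Mathlib


open Real

/-- Binary Kullback–Leibler divergence (base-2). -/
noncomputable def klDiv2 (l e : ℝ) : ℝ :=
  l * Real.logb 2 (l / e) + (1 - l) * Real.logb 2 ((1 - l) / (1 - e))

theorem binomial_tail_chernoff (n : ℕ) (e l : ℝ) (he : 0 < e) (hel : e < l)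
    (hl : l < 1) :
    ∑ i ∈ Finset.Icc ⌈l * n⌉₊ n,
        (n.choose i : ℝ) * e ^ i * (1 - e) ^ (n - i) ≤
      2 ^ (-(n : ℝ) * klDiv2 l e) := by
  have he1 : e < 1 := hel.trans hl
  have hl0 : 0 < l := he.trans hel
  have h1e : (0:ℝ) < 1 - e := by linarith
  have h1l : (0:ℝ) < 1 - l := by linarith
  set r : ℝ := l * (1 - e) / (e * (1 - l)) with hr_def
  have hr0 : 0 < r := by positivity
  have hr1 : 1 < r := by
    rw [hr_def, lt_div_iff₀ (by positivity)]
    nlinarith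
  have key : ∀ i ∈ Finset.Icc ⌈l * n⌉₊ n,
      (n.choose i : ℝ) * e ^ i * (1 - e) ^ (n - i) ≤
      ((n.choose i : ℝ) * e ^ i * (1 - e) ^ (n - i)) * r ^ ((i : ℝ) - l * n) := by
    intro i hi
    have hi' : l * n ≤ i := Nat.ceil_le.mp (Finset.mem_Icc.mp hi).1
    have h1 : 1 ≤ r ^ ((i : ℝ) - l * n) := Real.one_le_rpow hr1.le (by linarith)
    have ht : (0:ℝ) ≤ (n.choose i : ℝ) * e ^ i * (1 - e) ^ (n - i) := by positivity
    nlinarith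
  have hsubset : Finset.Icc ⌈l * n⌉₊ n ⊆ Finset.range (n + 1) := by
    intro i hi
    rw [Finset.mem_Icc] at hi
    rw [Finset.mem_range]
    omega
  calc ∑ i ∈ Finset.Icc ⌈l * n⌉₊ n,
        (n.choose i : ℝ) * e ^ i * (1 - e) ^ (n - i)
      ≤ ∑ i ∈ Finset.Icc ⌈l * n⌉₊ n,
        ((n.choose i : ℝ) * e ^ i * (1 - e) ^ (n - i)) * r ^ ((i : ℝ) - l * n) :=
        Finset.sum_le_sum key
    _ ≤ ∑ i ∈ Finset.range (n + 1),
        ((n.choose i : ℝ) * e ^ i * (1 - e) ^ (n - i)) * r ^ ((i : ℝ) - l * n) := by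
        refine Finset.sum_le_sum_of_subset_of_nonneg hsubset ?_
        intro i _ _
        positivity
    _ = r ^ (-(l * n)) * (e * r + (1 - e)) ^ n := by
        rw [add_pow, Finset.mul_sum]
        refine Finset.sum_congr rfl fun i hi => ?_
        rw [Finset.mem_range] at hi
        have : r ^ ((i : ℝ) - l * n) = r ^ (i : ℕ) * r ^ (-(l * n)) := by
          rw [← Real.rpow_natCast r i, ← Real.rpow_add hr0]
          ring_nf
        rw [this, mul_pow]
        ring
    _ = r ^ (-(l * n)) * ((1 - e) / (1 - l)) ^ n := by
        congr 2
        rw [hr_def, eq_div_iff h1l.ne']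
        field_simp
        ring
    _ = 2 ^ (-(n : ℝ) * klDiv2 l e) := by
        have hq : (0:ℝ) < (1 - e) / (1 - l) := by positivity
        rw [← Real.rpow_natCast ((1 - e) / (1 - l)) n,
          Real.rpow_def_of_pos hr0, Real.rpow_def_of_pos hq,
          Real.rpow_def_of_pos (by norm_num : (0:ℝ) < 2), ← Real.exp_add]
        congr 1
        have hlog2 : Real.log 2 ≠ 0 := (Real.log_pos one_lt_two).ne'
        have hD : klDiv2 l e * Real.log 2 =
            l * Real.log (l / e) + (1 - l) * Real.log ((1 - l) / (1 - e)) := by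
          unfold klDiv2
          rw [Real.logb, Real.logb]
          field_simp
        have h1 : Real.log r = Real.log l + Real.log (1 - e)
            - (Real.log e + Real.log (1 - l)) := by
          rw [hr_def, Real.log_div (by positivity) (by positivity),
            Real.log_mul hl0.ne' h1e.ne', Real.log_mul he.ne' h1l.ne']
        have h2 : Real.log ((1 - e) / (1 - l)) = Real.log (1 - e) - Real.log (1 - l) :=
          Real.log_div h1e.ne' h1l.ne'
        have h3 : Real.log (l / e) = Real.log l - Real.log e :=
          Real.log_div hl0.ne' he.ne'
        have h4 : Real.log ((1 - l) / (1 - e)) = Real.log (1 - l) - Real.log (1 - e) :=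
          Real.log_div h1l.ne' h1e.ne'
        rw [show Real.log 2 * (-(n:ℝ) * klDiv2 l e)
            = -(n:ℝ) * (klDiv2 l e * Real.log 2) from by ring, hD, h1, h2, h3, h4]
        ring
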